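/- Let Γ be a Q-polynomial distance-regular graph with diameter D ≥ 3, fix a base vertex x, and for −1 ≤ i,j ≤ D define V^{↓↓}_{i,j} = (E_0*V + ⋯ + E_i*V) ∩ (E_0V + ⋯ + E_jV) (interpreted as 0 when i = −1 or j = −1). Let Ṽ^{↓↓}_{i,j} be the orthogonal complement of V^{↓↓}_{i−1,j} + V^{↓↓}_{i,j−1} inside V^{↓↓}_{i,j}. Then V = Σ_{i=0}^D Σ_{j=0}^D Ṽ^{↓↓}_{i,j} is a direct sum. -/

import Mathlib

noncomputable section
open Matrix

/-- The i-th distance matrix of a graph G. -/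
noncomputable def Amat {X : Type} [Fintype X] [DecidableEq X] (G : SimpleGraph X)
    (i : ℕ) : Matrix X X ℂ :=
  Matrix.of fun x y => if G.dist x y = i then 1 else 0

/-- The i-th dual idempotent of G with respect to the base vertex x0. -/
noncomputable def Estar {X : Type} [Fintype X] [DecidableEq X] (G : SimpleGraph X)
    (x0 : X) (i : ℕ) : Matrix X X ℂ :=
  Matrix.diagonal fun y => if G.dist x0 y = i then 1 else 0
/-- The subconstituent (Terwilliger) algebra T = T(x0), generated by the
distance matrices and the dual idempotents. -/
noncomputable def Talg {X : Type} [Fintype X] [DecidableEq X] (G : SimpleGraph X)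
    (x0 : X) (D : ℕ) : Subalgebra ℂ (Matrix X X ℂ) :=
  Algebra.adjoin ℂ
    ((Set.range fun i : Fin (D + 1) => Amat G (i : ℕ)) ∪
      (Set.range fun i : Fin (D + 1) => Estar G x0 (i : ℕ)))

/-- W is a module for the subalgebra T of matrices. -/
def IsTMod {X : Type} [Fintype X] [DecidableEq X] (T : Subalgebra ℂ (Matrix X X ℂ))
    (W : Submodule ℂ (X → ℂ)) : Prop :=
  ∀ B ∈ T, ∀ v ∈ W, B.mulVec v ∈ W

/-- W is an irreducible T-module. -/
def IsIrredTMod {X : Type} [Fintype X] [DecidableEq X] (T : Subalgebra ℂ (Matrix X X ℂ))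
    (W : Submodule ℂ (X → ℂ)) : Prop :=
  IsTMod T W ∧ W ≠ ⊥ ∧
    ∀ U : Submodule ℂ (X → ℂ), U ≤ W → IsTMod T U → U = ⊥ ∨ U = W

/-- The Hermitean inner product ⟨u,v⟩ = uᵗ v̄ on ℂ^X. -/
noncomputable def herm {X : Type} [Fintype X] (u v : X → ℂ) : ℂ :=
  ∑ x, u x * (starRingEnd ℂ) (v x)

/-- The orthogonal complement of a subspace of ℂ^X with respect to `herm`. -/
noncomputable def orthoC {X : Type} [Fintype X] (W : Submodule ℂ (X → ℂ)) :
    Submodule ℂ (X → ℂ) where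
  carrier := {v | ∀ w ∈ W, herm v w = 0}
  add_mem' := by
    intro a b ha hb w hw
    have h1 := ha w hw
    have h2 := hb w hw
    simp only [herm, Pi.add_apply, add_mul] at *
    rw [Finset.sum_add_distrib, h1, h2, add_zero]
  zero_mem' := by
    intro w hw
    simp [herm]
  smul_mem' := by
    intro c a ha w hw
    have h1 := ha w hw
    simp only [herm, Pi.smul_apply, smul_eq_mul, mul_assoc, ← Finset.mul_sum] at *
    rw [h1, mul_zero]
/-- The subspace (E₀*V + ⋯ + E_i*V) ∩ (E₀V + ⋯ + E_jV) of the (↓,↓)-split decomposition. -/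
noncomputable def Vdd {X : Type} [Fintype X] [DecidableEq X] (G : SimpleGraph X)
    (x0 : X) (E : ℕ → Matrix X X ℂ) (i j : ℕ) : Submodule ℂ (X → ℂ) :=
  (⨆ h ∈ Finset.range (i + 1), LinearMap.range (Estar G x0 h).mulVecLin) ⊓
    (⨆ h ∈ Finset.range (j + 1), LinearMap.range (E h).mulVecLin)

/-- The subspace (E₀*V + ⋯ + E_i*V) ∩ (E_DV + ⋯ + E_{D-j}V) of the (↓,↑)-split
decomposition. -/
noncomputable def Vdu {X : Type} [Fintype X] [DecidableEq X] (G : SimpleGraph X)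
    (x0 : X) (D : ℕ) (E : ℕ → Matrix X X ℂ) (i j : ℕ) : Submodule ℂ (X → ℂ) :=
  (⨆ h ∈ Finset.range (i + 1), LinearMap.range (Estar G x0 h).mulVecLin) ⊓
    (⨆ h ∈ Finset.range (j + 1), LinearMap.range (E (D - h)).mulVecLin)

/-- The summand Ṽ^{↓↓}_{i,j}: the orthogonal complement of
V^{↓↓}_{i-1,j} + V^{↓↓}_{i,j-1} inside V^{↓↓}_{i,j}. -/
noncomputable def VddTilde {X : Type} [Fintype X] [DecidableEq X] (G : SimpleGraph X)
    (x0 : X) (E : ℕ → Matrix X X ℂ) (i j : ℕ) : Submodule ℂ (X → ℂ) :=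
  Vdd G x0 E i j ⊓ orthoC
    ((if i = 0 then ⊥ else Vdd G x0 E (i - 1) j) ⊔
      (if j = 0 then ⊥ else Vdd G x0 E i (j - 1)))

/-- The summand Ṽ^{↓↑}_{i,j}: the orthogonal complement of
V^{↓↑}_{i-1,j} + V^{↓↑}_{i,j-1} inside V^{↓↑}_{i,j}. -/
noncomputable def VduTilde {X : Type} [Fintype X] [DecidableEq X] (G : SimpleGraph X)
    (x0 : X) (D : ℕ) (E : ℕ → Matrix X X ℂ) (i j : ℕ) : Submodule ℂ (X → ℂ) :=
  Vdu G x0 D E i j ⊓ orthoC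
    ((if i = 0 then ⊥ else Vdu G x0 D E (i - 1) j) ⊔
      (if j = 0 then ⊥ else Vdu G x0 D E i (j - 1)))


/-! ### Auxiliary machinery for `stmt13` -/

open Module

/-- The identification of `X → ℂ` with Euclidean space. -/
noncomputable def eE (X : Type) [Fintype X] : (X → ℂ) ≃ₗ[ℂ] EuclideanSpace ℂ X :=
  (WithLp.linearEquiv 2 ℂ (X → ℂ)).symm

lemma herm_eq {X : Type} [Fintype X] (u v : X → ℂ) :
    herm u v = inner ℂ (eE X v) (eE X u) := by
  simp [herm, PiLp.inner_apply, RCLike.inner_apply, eE, WithLp.linearEquiv, mul_comm]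

lemma map_orthoC {X : Type} [Fintype X] (U : Submodule ℂ (X → ℂ)) :
    (orthoC U).map (eE X : (X → ℂ) →ₗ[ℂ] EuclideanSpace ℂ X) = (U.map (eE X : (X → ℂ) →ₗ[ℂ] EuclideanSpace ℂ X))ᗮ := by
  ext y
  simp only [Submodule.mem_map, Submodule.mem_orthogonal, LinearEquiv.coe_coe]
  constructor
  · rintro ⟨v, hv, rfl⟩ u ⟨w, hw, rfl⟩
    rw [← herm_eq]
    exact hv w hw
  · intro h
    refine ⟨(eE X).symm y, fun w hw => ?_, by simp⟩
    have := h (eE X w) ⟨w, hw, rfl⟩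
    rw [herm_eq, LinearEquiv.apply_symm_apply]
    exact this

lemma ortho_inf {X : Type} [Fintype X] (U : Submodule ℂ (X → ℂ)) :
    U ⊓ orthoC U = ⊥ := by
  have hinj := (eE X).injective
  apply Submodule.map_injective_of_injective hinj
  rw [Submodule.map_inf _ hinj, map_orthoC, Submodule.map_bot]
  exact (Submodule.orthogonal_disjoint _).eq_bot

lemma ortho_sup {X : Type} [Fintype X] {U W : Submodule ℂ (X → ℂ)} (h : U ≤ W) :
    U ⊔ (W ⊓ orthoC U) = W := by
  have hinj := (eE X).injective
  apply Submodule.map_injective_of_injective hinj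
  rw [Submodule.map_sup, Submodule.map_inf _ hinj, map_orthoC, inf_comm]
  exact Submodule.sup_orthogonal_inf_of_hasOrthogonalProjection (Submodule.map_mono h)

lemma ortho_rank {X : Type} [Fintype X] {U W : Submodule ℂ (X → ℂ)} (h : U ≤ W) :
    finrank ℂ U + finrank ℂ ↥(W ⊓ orthoC U) = finrank ℂ W := by
  have e1 := Submodule.finrank_sup_add_finrank_inf_eq U (W ⊓ orthoC U)
  rw [ortho_sup h] at e1
  have e2 : U ⊓ (W ⊓ orthoC U) = ⊥ := by
    rw [← le_bot_iff, ← ortho_inf U]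
    exact le_inf inf_le_left (inf_le_right.trans inf_le_right)
  rw [e2] at e1
  simpa using e1.symm

lemma finrank_biSup_le {X ι : Type} [Fintype X] [DecidableEq ι] (s : Finset ι)
    (f : ι → Submodule ℂ (X → ℂ)) :
    finrank ℂ ↥(⨆ i ∈ s, f i) ≤ ∑ i ∈ s, finrank ℂ (f i) := by
  classical
  induction s using Finset.induction with
  | empty => simp
  | @insert a s h ih =>
    rw [Finset.iSup_insert, Finset.sum_insert h]
    have e := Submodule.finrank_sup_add_finrank_inf_eq (f a) (⨆ i ∈ s, f i)
    omega

lemma indep_of_rank {X ι : Type} [Fintype X] [Fintype ι] [DecidableEq ι]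
    (f : ι → Submodule ℂ (X → ℂ)) (htop : ⨆ i, f i = ⊤)
    (hrank : ∑ i, finrank ℂ (f i) = finrank ℂ (X → ℂ)) :
    iSupIndep f := by
  rw [iSupIndep_def]
  intro k
  have hrw : (⨆ (j) (_ : j ≠ k), f j) = ⨆ j ∈ Finset.univ.erase k, f j := by
    simp [Finset.mem_erase]
  rw [hrw]
  set rest := ⨆ j ∈ Finset.univ.erase k, f j with hrest
  have hsplit : f k ⊔ rest = ⊤ := by
    rw [← htop]
    apply le_antisymm
    · exact sup_le (le_iSup f k) (iSup_le fun j => iSup_le fun _ => le_iSup f j)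
    · refine iSup_le fun j => ?_
      by_cases hj : j = k
      · subst hj; exact le_sup_left
      · exact le_trans (le_iSup₂ (f := fun j (_ : j ∈ Finset.univ.erase k) => f j) j
          (Finset.mem_erase.2 ⟨hj, Finset.mem_univ j⟩)) le_sup_right
  have e1 := Submodule.finrank_sup_add_finrank_inf_eq (f k) rest
  rw [hsplit, finrank_top] at e1
  have e2 : finrank ℂ ↥rest ≤ ∑ i ∈ Finset.univ.erase k, finrank ℂ (f i) :=
    finrank_biSup_le _ f
  have e3 : ∑ i ∈ Finset.univ.erase k, finrank ℂ (f i) + finrank ℂ (f k)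
      = finrank ℂ (X → ℂ) := by
    rw [Finset.sum_erase_add _ _ (Finset.mem_univ k)]; exact hrank
  have e4 : finrank ℂ ↥(f k ⊓ rest) = 0 := by omega
  rw [disjoint_iff]
  exact Submodule.finrank_eq_zero.mp e4

lemma top_of_sum_one {X : Type} [Fintype X] [DecidableEq X] (M : ℕ → Matrix X X ℂ)
    (n : ℕ) (h : ∑ h ∈ Finset.range n, M h = 1) :
    (⨆ h ∈ Finset.range n, LinearMap.range (M h).mulVecLin) = ⊤ := by
  rw [eq_top_iff]
  intro v _
  have hv : v = ∑ h ∈ Finset.range n, (M h).mulVec v := by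
    have heq : (∑ h ∈ Finset.range n, M h).mulVec v
        = ∑ h ∈ Finset.range n, (M h).mulVec v := by
      ext x
      rw [Finset.sum_apply]
      simp only [Matrix.mulVec, dotProduct, Matrix.sum_apply, Finset.sum_mul]
      exact Finset.sum_comm
    rw [← heq, h, Matrix.one_mulVec]
  rw [hv]
  exact Submodule.sum_mem _ fun h hh =>
    Submodule.mem_iSup_of_mem h (Submodule.mem_iSup_of_mem hh ⟨v, rfl⟩)

section VddLemmas

variable {X : Type} [Fintype X] [DecidableEq X]

/-- The first factor of `Vdd`. -/
noncomputable def SA (G : SimpleGraph X) (x0 : X) (i : ℕ) : Submodule ℂ (X → ℂ) :=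
  ⨆ h ∈ Finset.range (i + 1), LinearMap.range (Estar G x0 h).mulVecLin

/-- The second factor of `Vdd`. -/
noncomputable def SB (E : ℕ → Matrix X X ℂ) (j : ℕ) : Submodule ℂ (X → ℂ) :=
  ⨆ h ∈ Finset.range (j + 1), LinearMap.range (E h).mulVecLin

variable (G : SimpleGraph X) (x0 : X) (E : ℕ → Matrix X X ℂ)

lemma Vdd_eq (i j : ℕ) : Vdd G x0 E i j = SA G x0 i ⊓ SB E j := rfl

lemma SA_mono : Monotone (SA G x0) := fun _ _ h =>
  biSup_mono fun k hk => Finset.mem_range.2 ((Finset.mem_range.1 hk).trans_le (by omega))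

lemma SB_mono : Monotone (SB E) := fun _ _ h =>
  biSup_mono fun k hk => Finset.mem_range.2 ((Finset.mem_range.1 hk).trans_le (by omega))

lemma Vdd_mono {i i' j j' : ℕ} (hi : i ≤ i') (hj : j ≤ j') :
    Vdd G x0 E i j ≤ Vdd G x0 E i' j' :=
  inf_le_inf (SA_mono G x0 hi) (SB_mono E hj)

lemma Vdd_inf {i i' j j' : ℕ} (hi : i ≤ i') (hj : j ≤ j') :
    Vdd G x0 E i j' ⊓ Vdd G x0 E i' j = Vdd G x0 E i j := by
  rw [Vdd_eq, Vdd_eq, Vdd_eq, inf_inf_inf_comm, inf_eq_left.2 (SA_mono G x0 hi),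
    inf_eq_right.2 (SB_mono E hj)]

/-- The "previous" subspace below `Vdd i j`. -/
noncomputable def Pd (i j : ℕ) : Submodule ℂ (X → ℂ) :=
  (if i = 0 then ⊥ else Vdd G x0 E (i - 1) j) ⊔
    (if j = 0 then ⊥ else Vdd G x0 E i (j - 1))

lemma VddTilde_eq (i j : ℕ) :
    VddTilde G x0 E i j = Vdd G x0 E i j ⊓ orthoC (Pd G x0 E i j) := rfl

lemma Pd_le (i j : ℕ) : Pd G x0 E i j ≤ Vdd G x0 E i j := by
  unfold Pd
  apply sup_le <;> split_ifs
  · exact bot_le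
  · exact Vdd_mono G x0 E (Nat.sub_le i 1) le_rfl
  · exact bot_le
  · exact Vdd_mono G x0 E le_rfl (Nat.sub_le j 1)

lemma Pd_add_rank (i j : ℕ) :
    finrank ℂ (Pd G x0 E i j) + finrank ℂ (VddTilde G x0 E i j)
      = finrank ℂ (Vdd G x0 E i j) := by
  rw [VddTilde_eq]
  exact ortho_rank (Pd_le G x0 E i j)

lemma row_sum (i b : ℕ) :
    (∑ j ∈ Finset.range (b + 1), finrank ℂ (VddTilde G x0 E i j)) +
      (if i = 0 then 0 else finrank ℂ (Vdd G x0 E (i - 1) b))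
      = finrank ℂ (Vdd G x0 E i b) := by
  induction b with
  | zero =>
    have h1 := Pd_add_rank G x0 E i 0
    rw [Finset.sum_range_one]
    by_cases hi : i = 0
    · subst hi
      have hP : Pd G x0 E 0 0 = ⊥ := by unfold Pd; simp
      rw [hP] at h1
      simpa using h1
    · have hP : Pd G x0 E i 0 = Vdd G x0 E (i - 1) 0 := by
        unfold Pd; simp [hi]
      rw [hP] at h1
      simp only [hi, if_neg, ite_false]
      omega
  | succ b ih =>
    have h1 := Pd_add_rank G x0 E i (b + 1)
    rw [Finset.sum_range_succ]
    by_cases hi : i = 0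
    · subst hi
      have hP : Pd G x0 E 0 (b + 1) = Vdd G x0 E 0 b := by
        unfold Pd; simp
      rw [hP] at h1
      simp only [ite_true] at ih ⊢
      omega
    · have hP : Pd G x0 E i (b + 1)
          = Vdd G x0 E (i - 1) (b + 1) ⊔ Vdd G x0 E i b := by
        unfold Pd; simp [hi]
      have e := Submodule.finrank_sup_add_finrank_inf_eq
        (Vdd G x0 E (i - 1) (b + 1)) (Vdd G x0 E i b)
      rw [Vdd_inf G x0 E (Nat.sub_le i 1) (Nat.le_succ b)] at e
      rw [hP] at h1
      simp only [hi, ite_false] at ih ⊢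
      omega

lemma total_sum (D : ℕ) (a : ℕ) :
    ∑ i ∈ Finset.range (a + 1), ∑ j ∈ Finset.range (D + 1),
      finrank ℂ (VddTilde G x0 E i j) = finrank ℂ (Vdd G x0 E a D) := by
  induction a with
  | zero =>
    have := row_sum G x0 E 0 D
    rw [Finset.sum_range_one]
    simpa using this
  | succ a ih =>
    have hr := row_sum G x0 E (a + 1) D
    rw [Finset.sum_range_succ, ih]
    simp only [Nat.succ_ne_zero, ite_false, Nat.add_sub_cancel, Nat.succ_sub_one] at hr
    omega

end VddLemmas

theorem stmt13
    {X : Type} [Fintype X] [DecidableEq X] (G : SimpleGraph X) (hconn : G.Connected)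
    (D : ℕ) (hD : 3 ≤ D)
    (hdiam : ∀ x y : X, G.dist x y ≤ D) (hdiam' : ∃ x y : X, G.dist x y = D)
    (p : ℕ → ℕ → ℕ → ℕ)
    (hp : ∀ (h i j : ℕ) (x y : X), G.dist x y = h →
      p h i j = Nat.card {z : X // G.dist x z = i ∧ G.dist z y = j})
    (E : ℕ → Matrix X X ℂ)
    (hE0 : E 0 = (Fintype.card X : ℂ)⁻¹ • Matrix.of (fun _ _ => (1 : ℂ)))
    (hEsum : ∑ i ∈ Finset.range (D + 1), E i = 1)
    (hEmul : ∀ i j : ℕ, i ≤ D → j ≤ D → E i * E j = if i = j then E i else 0)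
    (hEsymm : ∀ i : ℕ, i ≤ D → (E i)ᵀ = E i)
    (hEreal : ∀ (i : ℕ), i ≤ D → ∀ x y : X, (E i x y).im = 0)
    (hEne : ∀ i : ℕ, i ≤ D → E i ≠ 0)
    (hEM : ∀ i : ℕ, i ≤ D → E i ∈ Algebra.adjoin ℂ {Amat G 1})
    (θ : ℕ → ℂ)
    (hθ : Amat G 1 = ∑ i ∈ Finset.range (D + 1), θ i • E i)
    (qk : ℕ → ℕ → ℕ → ℂ)
    (hqk : ∀ i j : ℕ, i ≤ D → j ≤ D →
      Matrix.hadamard (E i) (E j) =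
        (Fintype.card X : ℂ)⁻¹ • ∑ h ∈ Finset.range (D + 1), qk h i j • E h)
    (hQpoly : ∀ h i j : ℕ, h ≤ D → i ≤ D → j ≤ D →
      ((i + j < h ∨ h + j < i ∨ h + i < j) → qk h i j = 0) ∧
      ((h = i + j ∨ i = h + j ∨ j = h + i) → qk h i j ≠ 0))
    (x0 : X) (θs : ℕ → ℂ)
    (hθs : Matrix.diagonal (fun y => (Fintype.card X : ℂ) * E 1 x0 y) =
      ∑ i ∈ Finset.range (D + 1), θs i • Estar G x0 i)
    :
    iSupIndep
      (fun ij : Fin (D + 1) × Fin (D + 1) => VddTilde G x0 E (ij.1 : ℕ) (ij.2 : ℕ)) ∧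
    (⨆ ij : Fin (D + 1) × Fin (D + 1), VddTilde G x0 E (ij.1 : ℕ) (ij.2 : ℕ)) = ⊤ := by
  classical
  -- sum of dual idempotents is the identity
  have hEstarsum : ∑ h ∈ Finset.range (D + 1), Estar G x0 h = 1 := by
    ext y z
    simp only [Matrix.sum_apply, Estar, Matrix.diagonal_apply, Matrix.one_apply]
    by_cases hyz : y = z
    · simp [hyz, Nat.lt_succ_of_le (hdiam x0 z)]
    · simp [hyz]
  have hA : SA G x0 D = ⊤ := top_of_sum_one _ _ hEstarsum
  have hB : SB E D = ⊤ := top_of_sum_one _ _ hEsum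
  have hVtop : Vdd G x0 E D D = ⊤ := by
    rw [Vdd_eq, hA, hB, top_inf_eq]
  -- spanning
  have hspan : ∀ n i j, i + j = n → i ≤ D → j ≤ D → Vdd G x0 E i j ≤
      ⨆ ij : Fin (D + 1) × Fin (D + 1), VddTilde G x0 E (ij.1 : ℕ) (ij.2 : ℕ) := by
    intro n
    induction n using Nat.strong_induction_on with
    | _ n ihn =>
      intro i j hij hi hj
      have hdecomp : Pd G x0 E i j ⊔ VddTilde G x0 E i j = Vdd G x0 E i j := by
        rw [VddTilde_eq]
        exact ortho_sup (Pd_le G x0 E i j)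
      rw [← hdecomp]
      apply sup_le
      · unfold Pd
        apply sup_le <;> split_ifs with h
        · exact bot_le
        · exact ihn ((i - 1) + j) (by omega) _ _ rfl (by omega) hj
        · exact bot_le
        · exact ihn (i + (j - 1)) (by omega) _ _ rfl hi (by omega)
      · exact le_iSup (fun ij : Fin (D + 1) × Fin (D + 1) =>
          VddTilde G x0 E (ij.1 : ℕ) (ij.2 : ℕ))
          (⟨i, by omega⟩, ⟨j, by omega⟩)
  have htop : (⨆ ij : Fin (D + 1) × Fin (D + 1),
      VddTilde G x0 E (ij.1 : ℕ) (ij.2 : ℕ)) = ⊤ :=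
    le_antisymm le_top (hVtop ▸ hspan (D + D) D D rfl le_rfl le_rfl)
  -- rank counting
  have hrk : ∑ ij : Fin (D + 1) × Fin (D + 1),
      Module.finrank ℂ (VddTilde G x0 E (ij.1 : ℕ) (ij.2 : ℕ))
      = Module.finrank ℂ (X → ℂ) := by
    rw [Fintype.sum_prod_type]
    have h1 : ∑ a : Fin (D + 1), ∑ b : Fin (D + 1),
        Module.finrank ℂ (VddTilde G x0 E (a : ℕ) (b : ℕ))
        = ∑ a ∈ Finset.range (D + 1), ∑ b ∈ Finset.range (D + 1),
          Module.finrank ℂ (VddTilde G x0 E a b) := by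
      rw [Fin.sum_univ_eq_sum_range
        (fun a => ∑ b : Fin (D + 1), Module.finrank ℂ (VddTilde G x0 E a (b : ℕ)))]
      exact Finset.sum_congr rfl fun a _ =>
        Fin.sum_univ_eq_sum_range (fun b => Module.finrank ℂ (VddTilde G x0 E a b)) (D + 1)
    rw [h1, total_sum G x0 E D D, hVtop, finrank_top]
  exact ⟨indep_of_rank _ htop hrk, htop⟩
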